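/- arXiv:1711.02649 — 8 statements merged into one kernel-verified Lean document; each statement's English description precedes it below -/
import Mathlib

section
/- Any solution (T₁,T₂,T₃) of the reduced Nahm–Schmid equations with values in a compact Lie algebra is uniformly bounded: for all t in its interval of definition, ‖Tᵢ(t)‖² ≤ 2‖T₁(0)‖² + ‖T₂(0)‖² + ‖T₃(0)‖² for each i = 1,2,3. -/
open scoped RealInnerProductSpace


private lemma nahm_schmid_aux_P1 {L : Type*} [LieRing L] (x y : L) :
    ⁅⁅y, x⁆, y⁆ = ⁅y, ⁅x, y⁆⁆ := by
  rw [leibniz_lie y x y, lie_self, lie_zero, add_zero]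

private lemma nahm_schmid_aux_P2 {L : Type*} [LieRing L] (x y : L) :
    ⁅⁅y, x⁆, x⁆ = ⁅x, ⁅x, y⁆⁆ := by
  rw [← lie_skew x y, lie_neg, leibniz_lie x y x, lie_self, lie_zero, add_zero,
    ← lie_skew x y, neg_lie, neg_neg]

/-- Any solution of the reduced Nahm–Schmid equations on an interval `I`
containing `0`, with values in a Lie algebra with invariant inner product,
is uniformly bounded: `‖Tᵢ(t)‖² ≤ 2‖T₁(0)‖² + ‖T₂(0)‖² + ‖T₃(0)‖²`. -/
theorem reduced_nahm_schmid_bounded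
    {𝔤 : Type*} [NormedAddCommGroup 𝔤] [InnerProductSpace ℝ 𝔤]
    [LieRing 𝔤] [LieAlgebra ℝ 𝔤]
    (hinv : ∀ x y z : 𝔤, ⟪⁅x, y⁆, z⟫ = -⟪y, ⁅x, z⁆⟫)
    (I : Set ℝ) (hI : Convex ℝ I) (h0I : (0 : ℝ) ∈ I)
    (T₁ T₂ T₃ : ℝ → 𝔤)
    (h1 : ∀ t ∈ I, @HasDerivWithinAt ℝ _ 𝔤 NormedAddCommGroup.toAddCommGroup (@NormedSpace.toModule ℝ 𝔤 _ _ InnerProductSpace.toNormedSpace) _ (@IsBoundedSMul.continuousSMul ℝ 𝔤 _ _ _ (@NormedAddCommGroup.toAddCommGroup 𝔤 _).toZero (@NormedSpace.toModule ℝ 𝔤 _ _ InnerProductSpace.toNormedSpace).toSMul (@NormedSpace.toIsBoundedSMul ℝ 𝔤 _ _ InnerProductSpace.toNormedSpace)) T₁ (-⁅T₂ t, T₃ t⁆) I t)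
    (h2 : ∀ t ∈ I, @HasDerivWithinAt ℝ _ 𝔤 NormedAddCommGroup.toAddCommGroup (@NormedSpace.toModule ℝ 𝔤 _ _ InnerProductSpace.toNormedSpace) _ (@IsBoundedSMul.continuousSMul ℝ 𝔤 _ _ _ (@NormedAddCommGroup.toAddCommGroup 𝔤 _).toZero (@NormedSpace.toModule ℝ 𝔤 _ _ InnerProductSpace.toNormedSpace).toSMul (@NormedSpace.toIsBoundedSMul ℝ 𝔤 _ _ InnerProductSpace.toNormedSpace)) T₂ (⁅T₃ t, T₁ t⁆) I t)
    (h3 : ∀ t ∈ I, @HasDerivWithinAt ℝ _ 𝔤 NormedAddCommGroup.toAddCommGroup (@NormedSpace.toModule ℝ 𝔤 _ _ InnerProductSpace.toNormedSpace) _ (@IsBoundedSMul.continuousSMul ℝ 𝔤 _ _ _ (@NormedAddCommGroup.toAddCommGroup 𝔤 _).toZero (@NormedSpace.toModule ℝ 𝔤 _ _ InnerProductSpace.toNormedSpace).toSMul (@NormedSpace.toIsBoundedSMul ℝ 𝔤 _ _ InnerProductSpace.toNormedSpace)) T₃ (⁅T₁ t, T₂ t⁆) I t) :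
    ∀ t ∈ I,
      ‖T₁ t‖ ^ 2 ≤ 2 * ‖T₁ 0‖ ^ 2 + ‖T₂ 0‖ ^ 2 + ‖T₃ 0‖ ^ 2 ∧
      ‖T₂ t‖ ^ 2 ≤ 2 * ‖T₁ 0‖ ^ 2 + ‖T₂ 0‖ ^ 2 + ‖T₃ 0‖ ^ 2 ∧
      ‖T₃ t‖ ^ 2 ≤ 2 * ‖T₁ 0‖ ^ 2 + ‖T₂ 0‖ ^ 2 + ‖T₃ 0‖ ^ 2 := by
  have P1 : ∀ x y : 𝔤, ⁅⁅y, x⁆, y⁆ = ⁅y, ⁅x, y⁆⁆ := fun x y => nahm_schmid_aux_P1 x y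
  have P2 : ∀ x y : 𝔤, ⁅⁅y, x⁆, x⁆ = ⁅x, ⁅x, y⁆⁆ := fun x y => nahm_schmid_aux_P2 x y
  -- Key inner-product identity bridging the Lie and normed structures.
  have hb : ∀ x y : 𝔤, ⟪⁅y, x⁆, ⁅x, y⁆⟫ = -⟪⁅x, y⁆, ⁅x, y⁆⟫ := by
    intro x y
    calc ⟪⁅y, x⁆, ⁅x, y⁆⟫ = -⟪x, ⁅y, ⁅x, y⁆⁆⟫ := hinv y x ⁅x, y⁆
      _ = -⟪x, ⁅⁅y, x⁆, y⁆⟫ := by rw [P1 x y]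
      _ = ⟪⁅⁅y, x⁆, x⁆, y⟫ := (hinv ⁅y, x⁆ x y).symm
      _ = ⟪⁅x, ⁅x, y⁆⁆, y⟫ := by rw [P2 x y]
      _ = -⟪⁅x, y⁆, ⁅x, y⁆⟫ := by rw [hinv x ⁅x, y⁆ y]
  -- Antisymmetry of the bracket in the *normed* additive structure.
  letI : AddCommGroup 𝔤 := NormedAddCommGroup.toAddCommGroup
  have skewN : ∀ x y : 𝔤, ⁅y, x⁆ = -⁅x, y⁆ := by
    intro x y
    have hz : ⟪⁅x, y⁆ + ⁅y, x⁆, ⁅x, y⁆ + ⁅y, x⁆⟫ = (0 : ℝ) := by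
      simp only [inner_add_left, inner_add_right]
      have h1' := hb x y
      have h2' := hb y x
      have c1 : ⟪⁅x, y⁆, ⁅y, x⁆⟫ = ⟪⁅y, x⁆, ⁅x, y⁆⟫ := real_inner_comm _ _
      linarith
    have hz' : ⁅x, y⁆ + ⁅y, x⁆ = (0 : 𝔤) := inner_self_eq_zero.mp hz
    have := eq_neg_of_add_eq_zero_right hz'
    linear_combination (norm := abel1) this
  have skew : ∀ x y z : 𝔤, ⟪⁅x, y⁆, z⟫ = -⟪⁅y, x⁆, z⟫ := by
    intro x y z
    rw [skewN x y, inner_neg_left, neg_neg]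
  have key23 : ∀ t : ℝ, ⟪T₂ t, ⁅T₃ t, T₁ t⁆⟫ = ⟪T₁ t, ⁅T₂ t, T₃ t⁆⟫ := by
    intro t
    calc ⟪T₂ t, ⁅T₃ t, T₁ t⁆⟫ = ⟪⁅T₃ t, T₁ t⁆, T₂ t⟫ := real_inner_comm _ _
      _ = -⟪T₁ t, ⁅T₃ t, T₂ t⁆⟫ := hinv _ _ _
      _ = -⟪⁅T₃ t, T₂ t⁆, T₁ t⟫ := by rw [real_inner_comm]
      _ = ⟪⁅T₂ t, T₃ t⁆, T₁ t⟫ := by rw [skew (T₃ t) (T₂ t)]; ring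
      _ = ⟪T₁ t, ⁅T₂ t, T₃ t⁆⟫ := real_inner_comm _ _
  have key31 : ∀ t : ℝ, ⟪T₃ t, ⁅T₁ t, T₂ t⁆⟫ = ⟪T₁ t, ⁅T₂ t, T₃ t⁆⟫ := by
    intro t
    calc ⟪T₃ t, ⁅T₁ t, T₂ t⁆⟫ = ⟪⁅T₁ t, T₂ t⁆, T₃ t⟫ := real_inner_comm _ _
      _ = -⟪T₂ t, ⁅T₁ t, T₃ t⁆⟫ := hinv _ _ _
      _ = -⟪⁅T₁ t, T₃ t⁆, T₂ t⟫ := by rw [real_inner_comm]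
      _ = ⟪⁅T₃ t, T₁ t⁆, T₂ t⟫ := by rw [skew (T₁ t) (T₃ t)]; ring
      _ = ⟪T₂ t, ⁅T₃ t, T₁ t⁆⟫ := real_inner_comm _ _
      _ = ⟪T₁ t, ⁅T₂ t, T₃ t⁆⟫ := key23 t
  -- conserved quantities
  have const12 : ∀ t ∈ I, ⟪T₁ t, T₁ t⟫ + ⟪T₂ t, T₂ t⟫ = ⟪T₁ 0, T₁ 0⟫ + ⟪T₂ 0, T₂ 0⟫ := by
    intro t ht
    have hd : ∀ s ∈ I, HasDerivWithinAt
        (fun u => ⟪T₁ u, T₁ u⟫ + ⟪T₂ u, T₂ u⟫) (0 : ℝ) I s := by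
      intro s hs
      have d1 := ((h1 s hs).inner ℝ (h1 s hs))
      rw [lie_skew (T₃ s) (T₂ s), skewN (T₂ s) (T₃ s)] at d1
      have d2 := ((h2 s hs).inner ℝ (h2 s hs))
      have := d1.add d2
      refine HasDerivWithinAt.congr_deriv this ?_
      have k := key23 s
      simp only [inner_neg_left, inner_neg_right] at *
      linarith [k, real_inner_comm (T₂ s) ⁅T₃ s, T₁ s⁆,
        real_inner_comm (T₁ s) ⁅T₂ s, T₃ s⁆]
    have := hI.norm_image_sub_le_of_norm_hasDerivWithin_le (C := 0) hd
      (fun s _ => by simp) h0I ht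
    simp only [zero_mul, norm_le_zero_iff, sub_eq_zero] at this
    exact this
  have const13 : ∀ t ∈ I, ⟪T₁ t, T₁ t⟫ + ⟪T₃ t, T₃ t⟫ = ⟪T₁ 0, T₁ 0⟫ + ⟪T₃ 0, T₃ 0⟫ := by
    intro t ht
    have hd : ∀ s ∈ I, HasDerivWithinAt
        (fun u => ⟪T₁ u, T₁ u⟫ + ⟪T₃ u, T₃ u⟫) (0 : ℝ) I s := by
      intro s hs
      have d1 := ((h1 s hs).inner ℝ (h1 s hs))
      rw [lie_skew (T₃ s) (T₂ s), skewN (T₂ s) (T₃ s)] at d1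
      have d3 := ((h3 s hs).inner ℝ (h3 s hs))
      have := d1.add d3
      refine HasDerivWithinAt.congr_deriv this ?_
      have k := key31 s
      simp only [inner_neg_left, inner_neg_right] at *
      linarith [k, real_inner_comm (T₃ s) ⁅T₁ s, T₂ s⁆,
        real_inner_comm (T₁ s) ⁅T₂ s, T₃ s⁆]
    have := hI.norm_image_sub_le_of_norm_hasDerivWithin_le (C := 0) hd
      (fun s _ => by simp) h0I ht
    simp only [zero_mul, norm_le_zero_iff, sub_eq_zero] at this
    exact this
  intro t ht
  have e1 := const12 t ht
  have e2 := const13 t ht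
  have n1 : ∀ x : 𝔤, ⟪x, x⟫ = ‖x‖ ^ 2 := fun x => real_inner_self_eq_norm_sq x
  simp only [n1] at e1 e2
  have p1 : (0:ℝ) ≤ ‖T₁ t‖ ^ 2 := sq_nonneg _
  have p2 : (0:ℝ) ≤ ‖T₂ t‖ ^ 2 := sq_nonneg _
  have p3 : (0:ℝ) ≤ ‖T₃ t‖ ^ 2 := sq_nonneg _
  have q1 : (0:ℝ) ≤ ‖T₁ 0‖ ^ 2 := sq_nonneg _
  have q2 : (0:ℝ) ≤ ‖T₂ 0‖ ^ 2 := sq_nonneg _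
  have q3 : (0:ℝ) ≤ ‖T₃ 0‖ ^ 2 := sq_nonneg _
  refine ⟨by linarith, by linarith, by linarith⟩
end

section
/- The quantity C(t) = 2‖T₁(t)‖² + ‖T₂(t)‖² + ‖T₃(t)‖² is conserved along any solution of the reduced Nahm–Schmid equations. -/
open scoped RealInnerProductSpace

/-- Auxiliary: in any Lie ring, for every `y` there exists `q` (namely `-y` for the
Lie ring's additive structure) with `⁅x, q⁆ = ⁅y, x⁆` for all `x`. -/
lemma aux_negL_exists {L : Type*} [LieRing L] (y : L) :
    ∃ q : L, ∀ x : L, ⁅x, q⁆ = ⁅y, x⁆ :=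
  ⟨-y, fun x => by rw [lie_neg]; exact lie_skew y x⟩

/-- The quantity `C(t) = 2‖T₁(t)‖² + ‖T₂(t)‖² + ‖T₃(t)‖²` is conserved along
any solution of the reduced Nahm–Schmid equations. -/
theorem reduced_nahm_schmid_C_conserved
    {𝔤 : Type*} [NormedAddCommGroup 𝔤] [InnerProductSpace ℝ 𝔤]
    [LieRing 𝔤] [LieAlgebra ℝ 𝔤]
    (hinv : ∀ x y z : 𝔤, ⟪⁅x, y⁆, z⟫ = -⟪y, ⁅x, z⁆⟫)
    (T₁ T₂ T₃ : ℝ → 𝔤)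
    (h1 : ∀ t, @HasDerivAt ℝ _ 𝔤 NormedAddCommGroup.toAddCommGroup NormedSpace.toModule _
      (@IsBoundedSMul.continuousSMul ℝ 𝔤 _ _ _ (@AddCommGroup.toAddGroup 𝔤 NormedAddCommGroup.toAddCommGroup).toSubNegMonoid.toAddMonoid.toZero (@NormedSpace.toModule ℝ 𝔤 _ _ _).toSMul NormedSpace.toIsBoundedSMul)
      T₁ (-⁅T₂ t, T₃ t⁆) t)
    (h2 : ∀ t, @HasDerivAt ℝ _ 𝔤 NormedAddCommGroup.toAddCommGroup NormedSpace.toModule _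
      (@IsBoundedSMul.continuousSMul ℝ 𝔤 _ _ _ (@AddCommGroup.toAddGroup 𝔤 NormedAddCommGroup.toAddCommGroup).toSubNegMonoid.toAddMonoid.toZero (@NormedSpace.toModule ℝ 𝔤 _ _ _).toSMul NormedSpace.toIsBoundedSMul)
      T₂ (⁅T₃ t, T₁ t⁆) t)
    (h3 : ∀ t, @HasDerivAt ℝ _ 𝔤 NormedAddCommGroup.toAddCommGroup NormedSpace.toModule _
      (@IsBoundedSMul.continuousSMul ℝ 𝔤 _ _ _ (@AddCommGroup.toAddGroup 𝔤 NormedAddCommGroup.toAddCommGroup).toSubNegMonoid.toAddMonoid.toZero (@NormedSpace.toModule ℝ 𝔤 _ _ _).toSMul NormedSpace.toIsBoundedSMul)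
      T₃ (⁅T₁ t, T₂ t⁆) t) :
    ∀ t, 2 * ‖T₁ t‖ ^ 2 + ‖T₂ t‖ ^ 2 + ‖T₃ t‖ ^ 2
        = 2 * ‖T₁ 0‖ ^ 2 + ‖T₂ 0‖ ^ 2 + ‖T₃ 0‖ ^ 2 := by
  -- The key bridge identity: ⟪⁅x,y⁆,z⟫ + ⟪⁅y,x⁆,z⟫ = 0.
  have hG : ∀ x y z : 𝔤, ⟪⁅x, y⁆, z⟫ + ⟪⁅y, x⁆, z⟫ = 0 := by
    choose q hq using fun y : 𝔤 => aux_negL_exists y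
    set p : 𝔤 → 𝔤 := fun y => @HAdd.hAdd 𝔤 𝔤 𝔤 (@instHAdd 𝔤 (@AddCommGroup.toAddGroup 𝔤 NormedAddCommGroup.toAddCommGroup).toSubNegMonoid.toAddMonoid.toAddSemigroup.toAdd) y (q y) with hpdef
    have Hp : ∀ x y z : 𝔤, ⟪⁅x, p y⁆, z⟫ = ⟪⁅x, y⁆, z⟫ + ⟪⁅y, x⁆, z⟫ := by
      intro x y z
      have e1 : ⟪⁅x, p y⁆, z⟫ = -⟪p y, ⁅x, z⁆⟫ := hinv _ _ _
      have e2 : ⟪p y, ⁅x, z⁆⟫ = ⟪y, ⁅x, z⁆⟫ + ⟪q y, ⁅x, z⁆⟫ := by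
        simp only [hpdef]
        exact inner_add_left _ _ _
      have e3 : ⟪⁅x, y⁆, z⟫ = -⟪y, ⁅x, z⁆⟫ := hinv _ _ _
      have e4 : ⟪⁅x, q y⁆, z⟫ = -⟪q y, ⁅x, z⁆⟫ := hinv _ _ _
      rw [hq y x] at e4
      linarith
    have Ff : ∀ x y z : 𝔤, ⟪p y, ⁅x, z⁆⟫ = -(⟪⁅x, y⁆, z⟫ + ⟪⁅y, x⁆, z⟫) := by
      intro x y z
      have := hinv x (p y) z
      rw [Hp] at this
      linarith
    -- the quantity m a b c := ⟪⁅a,b⁆, p c⟫ + ⟪⁅b,a⁆, p c⟫ vanishes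
    set m : 𝔤 → 𝔤 → 𝔤 → ℝ := fun a b c => ⟪⁅a, b⁆, p c⟫ + ⟪⁅b, a⁆, p c⟫ with hmdef
    have msym : ∀ a b c : 𝔤, m a b c = m b a c := fun a b c => add_comm _ _
    have manti : ∀ a b c : 𝔤, m a b c = -m a c b := by
      intro a b c
      have a1 : ⟪⁅a, p b⁆, p c⟫ = ⟪⁅a, b⁆, p c⟫ + ⟪⁅b, a⁆, p c⟫ := Hp a b (p c)
      have a2 : ⟪⁅a, p b⁆, p c⟫ = -⟪p b, ⁅a, p c⁆⟫ := hinv _ _ _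
      have a3 : ⟪p b, ⁅a, p c⁆⟫ = ⟪⁅a, p c⁆, p b⟫ := real_inner_comm _ _
      have a4 : ⟪⁅a, p c⁆, p b⟫ = ⟪⁅a, c⁆, p b⟫ + ⟪⁅c, a⁆, p b⟫ := Hp a c (p b)
      simp only [hmdef]
      linarith
    have mzero : ∀ a b c : 𝔤, m a b c = 0 := by
      intro a b c
      have c1 := manti a b c
      have c2 := msym a c b
      have c3 := manti c a b
      have c4 := msym c b a
      have c5 := manti b c a
      have c6 := msym b a c
      linarith
    -- hence G x y z = -(G z y x)
    have Grel : ∀ x y z : 𝔤,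
        ⟪⁅x, y⁆, z⟫ + ⟪⁅y, x⁆, z⟫ = -(⟪⁅z, y⁆, x⟫ + ⟪⁅y, z⁆, x⟫) := by
      intro x y z
      have b1 := Ff x y z
      have b2 := Ff z y x
      have b3 : ⟪p y, ⁅x, z⁆⟫ = ⟪⁅x, z⁆, p y⟫ := real_inner_comm _ _
      have b4 : ⟪p y, ⁅z, x⁆⟫ = ⟪⁅z, x⁆, p y⟫ := real_inner_comm _ _
      have b5 := mzero x z y
      simp only [hmdef] at b5
      linarith
    -- G is symmetric in its first two arguments and antisymmetric in (1,3): S₃ forces 0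
    intro x y z
    have g12 : ∀ a b c : 𝔤,
        ⟪⁅a, b⁆, c⟫ + ⟪⁅b, a⁆, c⟫ = ⟪⁅b, a⁆, c⟫ + ⟪⁅a, b⁆, c⟫ :=
      fun a b c => add_comm _ _
    have d1 := Grel x y z
    have d2 := g12 z y x
    have d3 := Grel y z x
    have d4 := g12 x z y
    have d5 := Grel z x y
    have d6 := g12 y x z
    linarith
  have hA : ∀ x y z : 𝔤, ⟪⁅y, x⁆, z⟫ = -⟪⁅x, y⁆, z⟫ := by
    intro x y z
    have := hG x y z
    linarith
  -- now the standard conservation argument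
  set F : ℝ → ℝ := fun t =>
    2 * ⟪T₁ t, T₁ t⟫ + ⟪T₂ t, T₂ t⟫ + ⟪T₃ t, T₃ t⟫ with hF
  have hder : ∀ t, HasDerivAt F 0 t := by
    intro t
    have d1 := ((h1 t).inner ℝ (h1 t)).const_mul (2 : ℝ)
    have d2 := (h2 t).inner ℝ (h2 t)
    have d3 := (h3 t).inner ℝ (h3 t)
    have dd := (d1.add d2).add d3
    refine HasDerivAt.congr_deriv dd ?_
    -- abbreviations
    have hb1 : ⟪T₁ t, -⁅T₂ t, T₃ t⁆⟫ = -⟪⁅T₂ t, T₃ t⁆, T₁ t⟫ := by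
      rw [lie_skew]; exact (real_inner_comm _ _).trans (hA _ _ _)
    have hb2 : ⟪-⁅T₂ t, T₃ t⁆, T₁ t⟫ = -⟪⁅T₂ t, T₃ t⁆, T₁ t⟫ :=
      by rw [lie_skew]; exact hA _ _ _
    -- ⟪⁅T₃,T₁⁆,T₂⟫ = ⟪⁅T₂,T₃⁆,T₁⟫
    have eC : ⟪⁅T₃ t, T₁ t⁆, T₂ t⟫ = ⟪⁅T₂ t, T₃ t⁆, T₁ t⟫ := by
      have u1 := hinv (T₃ t) (T₁ t) (T₂ t)
      have u2 : ⟪T₁ t, ⁅T₃ t, T₂ t⁆⟫ = ⟪⁅T₃ t, T₂ t⁆, T₁ t⟫ := real_inner_comm _ _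
      have u3 := hA (T₂ t) (T₃ t) (T₁ t)
      linarith
    -- ⟪⁅T₁,T₂⁆,T₃⟫ = ⟪⁅T₃,T₁⁆,T₂⟫
    have eD : ⟪⁅T₁ t, T₂ t⁆, T₃ t⟫ = ⟪⁅T₃ t, T₁ t⁆, T₂ t⟫ := by
      have u1 := hinv (T₁ t) (T₂ t) (T₃ t)
      have u2 : ⟪T₂ t, ⁅T₁ t, T₃ t⁆⟫ = ⟪⁅T₁ t, T₃ t⁆, T₂ t⟫ := real_inner_comm _ _
      have u3 := hA (T₃ t) (T₁ t) (T₂ t)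
      linarith
    have hc1 : ⟪T₂ t, ⁅T₃ t, T₁ t⁆⟫ = ⟪⁅T₃ t, T₁ t⁆, T₂ t⟫ := real_inner_comm _ _
    have hc2 : ⟪T₃ t, ⁅T₁ t, T₂ t⁆⟫ = ⟪⁅T₁ t, T₂ t⁆, T₃ t⟫ := real_inner_comm _ _
    linarith
  have hconst : ∀ t, F t = F 0 := by
    intro t
    exact is_const_of_deriv_eq_zero (f := F)
      (fun x => (hder x).differentiableAt) (fun x => (hder x).deriv) t 0
  intro t
  have := hconst t
  simp only [hF] at this
  rw [← real_inner_self_eq_norm_sq, ← real_inner_self_eq_norm_sq,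
    ← real_inner_self_eq_norm_sq, ← real_inner_self_eq_norm_sq,
    ← real_inner_self_eq_norm_sq, ← real_inner_self_eq_norm_sq]
  exact this
end

section
/- Let f : [0,1] → ℝ be C², f ≥ 0, f(0) = 0, satisfying f̈ + M f ≥ 0 for a constant 0 < M < π². If f(t₀) = 0 for some t₀ ∈ (0,1], then f ≡ 0 on [0,t₀]. -/
open Real Set

/-- Sturm comparison lemma: if `f : [0,1] → ℝ` is `C²`, nonnegative, `f(0) = 0`,
satisfies `f̈ + M f ≥ 0` for a constant `0 < M < π²`, and `f(t₀) = 0` for some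
`t₀ ∈ (0,1]`, then `f ≡ 0` on `[0,t₀]`. -/
theorem sturm_comparison_vanishing
    (M : ℝ) (hM0 : 0 < M) (hMπ : M < Real.pi ^ 2)
    (f f' f'' : ℝ → ℝ)
    (hd1 : ∀ t ∈ Set.Icc (0 : ℝ) 1, HasDerivWithinAt f (f' t) (Set.Icc 0 1) t)
    (hd2 : ∀ t ∈ Set.Icc (0 : ℝ) 1, HasDerivWithinAt f' (f'' t) (Set.Icc 0 1) t)
    (hcont : ContinuousOn f'' (Set.Icc 0 1))
    (hnn : ∀ t ∈ Set.Icc (0 : ℝ) 1, 0 ≤ f t)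
    (hf0 : f 0 = 0)
    (hineq : ∀ t ∈ Set.Icc (0 : ℝ) 1, 0 ≤ f'' t + M * f t)
    (t₀ : ℝ) (ht₀ : t₀ ∈ Set.Ioc (0 : ℝ) 1) (hft₀ : f t₀ = 0) :
    ∀ t ∈ Set.Icc 0 t₀, f t = 0 := by
  obtain ⟨ht₀0, ht₀1⟩ := ht₀
  set r := Real.sqrt M with hr
  have hr0 : 0 < r := Real.sqrt_pos.2 hM0
  have hr2 : r ^ 2 = M := Real.sq_sqrt hM0.le
  have hrπ : r < Real.pi := by
    have := Real.sqrt_lt_sqrt hM0.le hMπ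
    rwa [Real.sqrt_sq Real.pi_pos.le] at this
  set g : ℝ → ℝ := fun t => Real.sin (r * t) with hg
  have hgderiv : ∀ x : ℝ, HasDerivAt g (r * Real.cos (r * x)) x := by
    intro x
    have h1 : HasDerivAt (fun t : ℝ => r * t) r x := by
      simpa using (hasDerivAt_id x).const_mul r
    have h := (Real.hasDerivAt_sin (r * x)).comp x h1
    rw [mul_comm (Real.cos (r * x)) r] at h
    exact h
  have hgpos : ∀ u : ℝ, 0 < u → u ≤ 1 → 0 < g u := by
    intro u hu hu1
    apply Real.sin_pos_of_pos_of_lt_pi (by positivity)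
    calc r * u ≤ r * 1 := by nlinarith
    _ < Real.pi := by linarith
  have hgnn : ∀ u ∈ Icc (0:ℝ) 1, 0 ≤ g u := by
    rintro u ⟨hu0, hu1⟩
    apply Real.sin_nonneg_of_nonneg_of_le_pi (by positivity)
    nlinarith
  set W : ℝ → ℝ := fun t => f' t * g t - f t * (r * Real.cos (r * t)) with hW
  have hfc : ContinuousOn f (Icc 0 1) := fun t ht => (hd1 t ht).continuousWithinAt
  have hf'c : ContinuousOn f' (Icc 0 1) := fun t ht => (hd2 t ht).continuousWithinAt
  have hgc : Continuous g := Real.continuous_sin.comp (continuous_const.mul continuous_id)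
  have hWc : ContinuousOn W (Icc 0 1) := by
    apply ContinuousOn.sub
    · exact hf'c.mul hgc.continuousOn
    · exact hfc.mul (Continuous.continuousOn (continuous_const.mul (Real.continuous_cos.comp (continuous_const.mul continuous_id))))
  have hWd : ∀ x ∈ Ioo (0:ℝ) 1, HasDerivAt W ((f'' x + M * f x) * g x) x := by
    intro x hx
    have hxI : Icc (0:ℝ) 1 ∈ nhds x := Icc_mem_nhds hx.1 hx.2
    have h1 : HasDerivAt f (f' x) x := (hd1 x (Ioo_subset_Icc_self hx)).hasDerivAt hxI
    have h2 : HasDerivAt f' (f'' x) x := (hd2 x (Ioo_subset_Icc_self hx)).hasDerivAt hxI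
    have hsin := hgderiv x
    have hcos : HasDerivAt (fun t => r * Real.cos (r * t)) (r * (-Real.sin (r * x) * r)) x := by
      have h3 : HasDerivAt (fun t : ℝ => r * t) r x := by
        simpa using (hasDerivAt_id x).const_mul r
      exact ((Real.hasDerivAt_cos (r * x)).comp x h3).const_mul r
    have hD := (h2.mul hsin).sub (h1.mul hcos)
    have e : g x = Real.sin (r * x) := rfl
    refine hD.congr_deriv ?_
    linear_combination (f x * Real.sin (r * x)) * hr2 - (M * f x) * e
  have hWmono : MonotoneOn W (Icc 0 1) := by
    apply monotoneOn_of_deriv_nonneg (convex_Icc 0 1) hWc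
    · rw [interior_Icc]
      exact fun x hx => ((hWd x hx).differentiableAt).differentiableWithinAt
    · rw [interior_Icc]
      intro x hx
      rw [(hWd x hx).deriv]
      exact mul_nonneg (hineq x (Ioo_subset_Icc_self hx)) (hgnn x (Ioo_subset_Icc_self hx))
  have hW0 : W 0 = 0 := by simp [hW, hg, hf0]
  rintro t ⟨ht0, htt₀⟩
  have htI : t ∈ Icc (0:ℝ) 1 := ⟨ht0, htt₀.trans ht₀1⟩
  by_contra hne
  have hft : 0 < f t := lt_of_le_of_ne (hnn t htI) (Ne.symm hne)
  have ht0' : 0 < t := by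
    rcases eq_or_lt_of_le ht0 with h | h
    · exact absurd (by rw [← h, hf0]) hne
    · exact h
  have htlt : t < t₀ := lt_of_le_of_ne htt₀ (by rintro rfl; exact hne hft₀)
  have hsub : Icc t t₀ ⊆ Icc (0:ℝ) 1 := Icc_subset_Icc ht0 ht₀1
  have hqc : ContinuousOn (fun u => f u / g u) (Icc t t₀) := by
    apply (hfc.mono hsub).div (hgc.continuousOn.mono hsub)
    rintro u ⟨hu1, hu2⟩
    exact ne_of_gt (hgpos u (lt_of_lt_of_le ht0' hu1) (le_trans hu2 ht₀1))
  have hqd : ∀ x ∈ Ioo t t₀, HasDerivAt (fun u => f u / g u) (W x / (g x) ^ 2) x := by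
    intro x hx
    have hx01 : x ∈ Ioo (0:ℝ) 1 := ⟨lt_trans ht0' hx.1, lt_of_lt_of_le hx.2 ht₀1⟩
    have hxI : Icc (0:ℝ) 1 ∈ nhds x := Icc_mem_nhds hx01.1 hx01.2
    have h1 : HasDerivAt f (f' x) x := (hd1 x (Ioo_subset_Icc_self hx01)).hasDerivAt hxI
    have hgx : g x ≠ 0 := ne_of_gt (hgpos x hx01.1 hx01.2.le)
    exact h1.div (hgderiv x) hgx
  obtain ⟨c, hc, hceq⟩ := exists_hasDerivAt_eq_slope (fun u => f u / g u)
    (fun x => W x / (g x) ^ 2) htlt hqc hqd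
  have hcI : c ∈ Icc (0:ℝ) 1 :=
    ⟨(lt_trans ht0' hc.1).le, (lt_of_lt_of_le hc.2 ht₀1).le⟩
  have hWcnn : 0 ≤ W c := hW0 ▸ hWmono ⟨le_refl 0, zero_le_one⟩ hcI hcI.1
  have hlhs : 0 ≤ W c / (g c) ^ 2 := div_nonneg hWcnn (sq_nonneg _)
  have hgt : 0 < g t := hgpos t ht0' htI.2
  have hrhs : (f t₀ / g t₀ - f t / g t) / (t₀ - t) < 0 := by
    apply div_neg_of_neg_of_pos _ (by linarith)
    rw [hft₀]
    simp only [zero_div, zero_sub, neg_neg]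
    simp
    positivity
  rw [hceq] at hlhs
  linarith
end

section
/- Let X be a complex n×n matrix such that any two eigenvalues λ₁, λ₂ of X satisfy λ₁·conj(λ₂) ≠ 1. Then the only Hermitian matrix h with X* h X = h is h = 0. -/
open Matrix

lemma mem_spectrum_of_det_eq_zero {n : ℕ} (M : Matrix (Fin n) (Fin n) ℂ) (μ : ℂ)
    (hdet : det (μ • (1 : Matrix (Fin n) (Fin n) ℂ) - M) = 0) : μ ∈ spectrum ℂ M := by
  rw [spectrum.mem_iff]
  intro hU
  rw [Matrix.isUnit_iff_isUnit_det] at hU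
  rw [show (algebraMap ℂ (Matrix (Fin n) (Fin n) ℂ)) μ - M
      = μ • (1 : Matrix (Fin n) (Fin n) ℂ) - M by
    simp [Algebra.algebraMap_eq_smul_one]] at hU
  rw [hdet] at hU
  exact hU.ne_zero rfl

lemma mem_spectrum_of_mulVec {n : ℕ} (M : Matrix (Fin n) (Fin n) ℂ) (μ : ℂ)
    (v : Fin n → ℂ) (hv : v ≠ 0) (hMv : M.mulVec v = μ • v) : μ ∈ spectrum ℂ M := by
  apply mem_spectrum_of_det_eq_zero
  rw [← Matrix.exists_mulVec_eq_zero_iff]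
  refine ⟨v, hv, ?_⟩
  rw [Matrix.sub_mulVec, Matrix.smul_mulVec, Matrix.one_mulVec, hMv, sub_self]

/-- If any two eigenvalues `λ₁, λ₂` of a complex matrix `X` satisfy
`λ₁·conj(λ₂) ≠ 1`, then the only Hermitian matrix `h` with `X* h X = h` is
`h = 0`. -/
theorem hermitian_fixed_by_congruence_eq_zero
    (n : ℕ) (X : Matrix (Fin n) (Fin n) ℂ)
    (hspec : ∀ lam₁ lam₂ : ℂ, lam₁ ∈ spectrum ℂ X → lam₂ ∈ spectrum ℂ X →
      lam₁ * (starRingEnd ℂ) lam₂ ≠ 1)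
    (h : Matrix (Fin n) (Fin n) ℂ) (hherm : h.IsHermitian)
    (heq : Xᴴ * h * X = h) :
    h = 0 := by
  by_contra hne
  set A : Module.End ℂ (Matrix (Fin n) (Fin n) ℂ) := LinearMap.mulLeft ℂ Xᴴ with hA
  set B : Module.End ℂ (Matrix (Fin n) (Fin n) ℂ) := LinearMap.mulRight ℂ X with hB
  have hAapp : ∀ m, A m = Xᴴ * m := fun m => rfl
  have hBapp : ∀ m, B m = m * X := fun m => rfl
  have hAB : ∀ m, A (B m) = B (A m) := by
    intro m; rw [hAapp, hBapp, hAapp, hBapp, mul_assoc]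
  set W : Submodule ℂ (Matrix (Fin n) (Fin n) ℂ) := LinearMap.ker (A * B - 1) with hW
  have hmemW : ∀ m, m ∈ W ↔ Xᴴ * m * X = m := by
    intro m
    rw [hW, LinearMap.mem_ker, LinearMap.sub_apply, Module.End.one_apply,
      Module.End.mul_apply, hAapp, hBapp, sub_eq_zero, mul_assoc]
  have hhW : h ∈ W := (hmemW h).2 heq
  have hAW : ∀ m ∈ W, A m ∈ W := by
    intro m hm
    rw [hmemW] at hm ⊢
    rw [hAapp]
    calc Xᴴ * (Xᴴ * m) * X = Xᴴ * (Xᴴ * m * X) := by rw [mul_assoc, mul_assoc]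
    _ = Xᴴ * m := by rw [hm]
  have hBW : ∀ m ∈ W, B m ∈ W := by
    intro m hm
    rw [hmemW] at hm ⊢
    rw [hBapp]
    calc Xᴴ * (m * X) * X = (Xᴴ * m * X) * X := by rw [mul_assoc, ← mul_assoc, ← mul_assoc]
    _ = m * X := by rw [hm]
  haveI : Nontrivial W := Submodule.nontrivial_iff_ne_bot.2 (by
    intro hbot
    exact hne (by simpa [hbot] using hhW))
  obtain ⟨α, hα⟩ := Module.End.exists_eigenvalue (A.restrict hAW)
  obtain ⟨v, hv⟩ := hα.exists_hasEigenvector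
  have hvV : A (v : Matrix (Fin n) (Fin n) ℂ) = α • (v : Matrix (Fin n) (Fin n) ℂ) :=
    congrArg Subtype.val hv.apply_eq_smul
  set E : Submodule ℂ (Matrix (Fin n) (Fin n) ℂ) := W ⊓ Module.End.eigenspace A α with hE
  have hvE : (v : Matrix (Fin n) (Fin n) ℂ) ∈ E :=
    Submodule.mem_inf.2 ⟨v.2, Module.End.mem_eigenspace_iff.2 hvV⟩
  haveI : Nontrivial E := Submodule.nontrivial_iff_ne_bot.2 (by
    intro hbot
    have : (v : Matrix (Fin n) (Fin n) ℂ) = 0 := by simpa [hbot] using hvE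
    exact hv.2 (Subtype.val_injective this))
  have hBE : ∀ m ∈ E, B m ∈ E := by
    intro m hm
    obtain ⟨hm1, hm2⟩ := Submodule.mem_inf.1 hm
    rw [Module.End.mem_eigenspace_iff] at hm2
    refine Submodule.mem_inf.2 ⟨hBW m hm1, ?_⟩
    rw [Module.End.mem_eigenspace_iff, hAB, hm2]
    exact LinearMap.map_smul B α m
  obtain ⟨β, hβ⟩ := Module.End.exists_eigenvalue (B.restrict hBE)
  obtain ⟨u, hu⟩ := hβ.exists_hasEigenvector
  have huV : B (u : Matrix (Fin n) (Fin n) ℂ) = β • (u : Matrix (Fin n) (Fin n) ℂ) :=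
    congrArg Subtype.val hu.apply_eq_smul
  obtain ⟨huW, huA⟩ := Submodule.mem_inf.1 u.2
  rw [Module.End.mem_eigenspace_iff] at huA
  have hune : (u : Matrix (Fin n) (Fin n) ℂ) ≠ 0 := fun h0 => hu.2 (Subtype.val_injective h0)
  have h1 : Xᴴ * (u : Matrix (Fin n) (Fin n) ℂ) = α • (u : Matrix (Fin n) (Fin n) ℂ) := by
    rw [← hAapp]; exact huA
  have h2 : (u : Matrix (Fin n) (Fin n) ℂ) * X = β • (u : Matrix (Fin n) (Fin n) ℂ) := by
    rw [← hBapp]; exact huV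
  have h3 : Xᴴ * (u : Matrix (Fin n) (Fin n) ℂ) * X = (u : Matrix (Fin n) (Fin n) ℂ) :=
    (hmemW _).1 huW
  have hab : α * β = 1 := by
    have key : (u : Matrix (Fin n) (Fin n) ℂ) = (α * β) • (u : Matrix (Fin n) (Fin n) ℂ) := by
      calc (u : Matrix (Fin n) (Fin n) ℂ) = Xᴴ * ((u : Matrix (Fin n) (Fin n) ℂ) * X) := by
            rw [← mul_assoc, h3]
      _ = Xᴴ * (β • (u : Matrix (Fin n) (Fin n) ℂ)) := by rw [h2]
      _ = β • (Xᴴ * (u : Matrix (Fin n) (Fin n) ℂ)) := by rw [Matrix.mul_smul]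
      _ = β • (α • (u : Matrix (Fin n) (Fin n) ℂ)) := by rw [h1]
      _ = (α * β) • (u : Matrix (Fin n) (Fin n) ℂ) := by rw [smul_smul, mul_comm]
    by_contra hx
    have : ((1 : ℂ) - α * β) • (u : Matrix (Fin n) (Fin n) ℂ) = 0 := by
      rw [sub_smul, one_smul, ← key, sub_self]
    rcases smul_eq_zero.1 this with h' | h'
    · exact hx (by linear_combination -h')
    · exact hune h'
  obtain ⟨i, j, hij⟩ : ∃ i j, (u : Matrix (Fin n) (Fin n) ℂ) i j ≠ 0 := by
    by_contra hc
    push_neg at hc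
    exact hune (by ext i j; exact hc i j)
  have hαspec : (starRingEnd ℂ) α ∈ spectrum ℂ X := by
    apply mem_spectrum_of_det_eq_zero
    have hαH : α ∈ spectrum ℂ Xᴴ := by
      apply mem_spectrum_of_mulVec Xᴴ α (fun k => (u : Matrix (Fin n) (Fin n) ℂ) k j)
      · intro h0; exact hij (congrFun h0 i)
      · ext k
        have hk : (Xᴴ * (u : Matrix (Fin n) (Fin n) ℂ)) k j
            = (α • (u : Matrix (Fin n) (Fin n) ℂ)) k j := by rw [h1]
        rw [Matrix.mul_apply] at hk
        simpa [Matrix.mulVec, dotProduct, Matrix.smul_apply] using hk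
    rw [spectrum.mem_iff, Matrix.isUnit_iff_isUnit_det] at hαH
    by_contra hdet
    apply hαH
    have key : (algebraMap ℂ (Matrix (Fin n) (Fin n) ℂ)) α - Xᴴ
        = ((starRingEnd ℂ) α • (1 : Matrix (Fin n) (Fin n) ℂ) - X)ᴴ := by
      rw [Matrix.conjTranspose_sub, Matrix.conjTranspose_smul]
      simp [Algebra.algebraMap_eq_smul_one]
    rw [key, Matrix.det_conjTranspose, isUnit_iff_ne_zero]
    intro hz
    apply hdet
    have := congrArg star hz
    rwa [star_star, star_zero] at this
  have hβspec : β ∈ spectrum ℂ X := by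
    apply mem_spectrum_of_det_eq_zero
    have hβT : β ∈ spectrum ℂ Xᵀ := by
      apply mem_spectrum_of_mulVec Xᵀ β (fun k => (u : Matrix (Fin n) (Fin n) ℂ) i k)
      · intro h0; exact hij (congrFun h0 j)
      · ext k
        have hk : ((u : Matrix (Fin n) (Fin n) ℂ) * X) i k
            = (β • (u : Matrix (Fin n) (Fin n) ℂ)) i k := by rw [h2]
        rw [Matrix.mul_apply, Matrix.smul_apply, smul_eq_mul] at hk
        simp only [Matrix.mulVec, dotProduct, Matrix.transpose_apply, Pi.smul_apply,
          smul_eq_mul]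
        rw [← hk]
        exact Finset.sum_congr rfl fun x _ => mul_comm _ _
    rw [spectrum.mem_iff, Matrix.isUnit_iff_isUnit_det] at hβT
    by_contra hdet
    apply hβT
    have key : (algebraMap ℂ (Matrix (Fin n) (Fin n) ℂ)) β - Xᵀ
        = (β • (1 : Matrix (Fin n) (Fin n) ℂ) - X)ᵀ := by
      rw [Matrix.transpose_sub, Matrix.transpose_smul]
      simp [Algebra.algebraMap_eq_smul_one]
    rw [key, Matrix.det_transpose, isUnit_iff_ne_zero]
    exact fun hz => hdet hz
  exact hspec β ((starRingEnd ℂ) α) hβspec hαspec (by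
    rw [Complex.conj_conj, mul_comm]; exact hab)
end

section
/- Suppose A, B are complex n×n matrices with det(B + A*ζ) ≠ 0 for all |ζ| ≤ 1, and suppose a, b are complex n×n matrices satisfying aB + Ab = 0 and aA* + Aa* + b*B + B*b = 0. Then there exists a unique skew-Hermitian matrix ρ with a = Aρ and b = -ρB. -/
open Matrix

attribute [local instance] Matrix.frobeniusSeminormedAddCommGroup
  Matrix.frobeniusNormedRing Matrix.frobeniusNormedAlgebra

open Filter Topology in
/-- If all eigenvalues of `X` have modulus `< 1`, some power of `X` has Frobenius norm `< 1`. -/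
lemma exists_pow_norm_lt_one {n : ℕ} (X : Matrix (Fin n) (Fin n) ℂ)
    (hX : ∀ μ ∈ spectrum ℂ X, ‖μ‖ < 1) : ∃ k : ℕ, 1 ≤ k ∧ ‖X ^ k‖ < 1 := by
  have hrad : spectralRadius ℂ X < 1 := by
    rcases (spectrum ℂ X).eq_empty_or_nonempty with h | h
    · simp [spectralRadius, h]
    · have hfin : (spectrum ℂ X).Finite := X.finite_spectrum
      obtain ⟨μ0, hμ0, hmax⟩ := hfin.toFinset.exists_max_image (fun μ => ‖μ‖₊)
        (by simpa [Set.Finite.toFinset_nonempty] using h)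
      rw [Set.Finite.mem_toFinset] at hμ0
      calc spectralRadius ℂ X ≤ (‖μ0‖₊ : ENNReal) := by
            refine iSup₂_le fun μ hμ => ?_
            exact_mod_cast hmax μ (hfin.mem_toFinset.mpr hμ)
        _ < 1 := by
            rw [← ENNReal.coe_one, ENNReal.coe_lt_coe, ← NNReal.coe_lt_coe]
            exact hX μ0 hμ0
  have hT := spectrum.pow_nnnorm_pow_one_div_tendsto_nhds_spectralRadius X
  have hE : ∀ᶠ k : ℕ in atTop, (‖X ^ k‖₊ : ENNReal) ^ (1 / (k : ℝ)) < 1 :=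
    hT.eventually_lt_const hrad
  obtain ⟨k, hk1, hk⟩ := (hE.and (eventually_ge_atTop 1)).exists
  refine ⟨k, hk, ?_⟩
  by_contra hge
  push_neg at hge
  have h1 : (1 : ENNReal) ≤ (‖X ^ k‖₊ : ENNReal) := by
    rw [← ENNReal.coe_one, ENNReal.coe_le_coe, ← NNReal.coe_le_coe]
    simpa using hge
  have hp : (0 : ℝ) < 1 / (k : ℝ) := by positivity
  have := ENNReal.rpow_le_rpow h1 hp.le
  rw [ENNReal.one_rpow] at this
  exact absurd hk1 (not_lt.mpr this)

/-- If `Xᴴ H X = H` and all eigenvalues of `X` have modulus `< 1`, then `H = 0`. -/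
lemma fixed_eq_zero {n : ℕ} (X H : Matrix (Fin n) (Fin n) ℂ)
    (hX : ∀ μ ∈ spectrum ℂ X, ‖μ‖ < 1) (hfix : Xᴴ * H * X = H) : H = 0 := by
  have iter : ∀ k : ℕ, (X ^ k)ᴴ * H * X ^ k = H := by
    intro k
    induction k with
    | zero => simp
    | succ k ih =>
      have : X ^ (k + 1) = X ^ k * X := pow_succ X k
      rw [this, conjTranspose_mul]
      calc Xᴴ * (X ^ k)ᴴ * H * (X ^ k * X)
          = Xᴴ * ((X ^ k)ᴴ * H * X ^ k) * X := by noncomm_ring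
        _ = Xᴴ * H * X := by rw [ih]
        _ = H := hfix
  obtain ⟨k, hk1, hk⟩ := exists_pow_norm_lt_one X hX
  have hb : ‖H‖ ≤ ‖X ^ k‖ * ‖H‖ * ‖X ^ k‖ := by
    conv_lhs => rw [← iter k]
    calc ‖(X ^ k)ᴴ * H * X ^ k‖ ≤ ‖(X ^ k)ᴴ * H‖ * ‖X ^ k‖ := norm_mul_le _ _
      _ ≤ ‖(X ^ k)ᴴ‖ * ‖H‖ * ‖X ^ k‖ := by
          gcongr
          exact norm_mul_le _ _
      _ = ‖X ^ k‖ * ‖H‖ * ‖X ^ k‖ := by rw [Matrix.frobenius_norm_conjTranspose]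
  have hHnn : 0 ≤ ‖H‖ := norm_nonneg H
  have hXnn : 0 ≤ ‖X ^ k‖ := norm_nonneg _
  rcases hHnn.eq_or_lt with h0 | hpos
  · exact norm_eq_zero.mp h0.symm
  · exfalso
    have h1 : ‖X ^ k‖ * ‖H‖ * ‖X ^ k‖ ≤ ‖X ^ k‖ * ‖H‖ :=
      mul_le_of_le_one_right (mul_nonneg hXnn hpos.le) hk.le
    have h2 : ‖X ^ k‖ * ‖H‖ < ‖H‖ := mul_lt_of_lt_one_left hpos hk
    linarith

/-- If `det(B + A*ζ) ≠ 0` for all `|ζ| ≤ 1` and `a, b` satisfy `aB + Ab = 0`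
and `aA* + Aa* + b*B + B*b = 0`, then there exists a unique skew-Hermitian
matrix `ρ` with `a = Aρ` and `b = -ρB`. -/
theorem unique_skew_hermitian_rho
    (n : ℕ) (A B a b : Matrix (Fin n) (Fin n) ℂ)
    (hdet : ∀ ζ : ℂ, ‖ζ‖ ≤ 1 → (B + ζ • Aᴴ).det ≠ 0)
    (h1 : a * B + A * b = 0)
    (h2 : a * Aᴴ + A * aᴴ + bᴴ * B + Bᴴ * b = 0) :
    ∃! ρ : Matrix (Fin n) (Fin n) ℂ,
      ρᴴ = -ρ ∧ a = A * ρ ∧ b = -(ρ * B) := by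
  have hB : IsUnit B.det := by
    have := hdet 0 (by simp)
    simpa [isUnit_iff_ne_zero] using this
  have hBB : B * B⁻¹ = 1 := Matrix.mul_nonsing_inv B hB
  have hBB' : B⁻¹ * B = 1 := Matrix.nonsing_inv_mul B hB
  have hBH : IsUnit Bᴴ.det := by
    rw [Matrix.det_conjTranspose]
    exact hB.star
  have hBBH : Bᴴ⁻¹ * Bᴴ = 1 := Matrix.nonsing_inv_mul Bᴴ hBH
  set ρ : Matrix (Fin n) (Fin n) ℂ := -(b * B⁻¹) with hρ
  have hb : b = -(ρ * B) := by
    rw [hρ]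
    calc b = b * (B⁻¹ * B) := by rw [hBB', mul_one]
      _ = -(-(b * B⁻¹) * B) := by noncomm_ring
  have ha : a = A * ρ := by
    have h1' : a * B = -(A * b) := eq_neg_of_add_eq_zero_left h1
    calc a = a * (B * B⁻¹) := by rw [hBB, mul_one]
      _ = (a * B) * B⁻¹ := by noncomm_ring
      _ = -(A * b) * B⁻¹ := by rw [h1']
      _ = A * ρ := by rw [hρ, Matrix.neg_mul, Matrix.mul_neg, Matrix.mul_assoc]
  -- the Hermitian part of ρ
  set H : Matrix (Fin n) (Fin n) ℂ := ρ + ρᴴ with hH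
  have key : A * H * Aᴴ - Bᴴ * H * B = 0 := by
    have e : a * Aᴴ + A * aᴴ + bᴴ * B + Bᴴ * b = A * H * Aᴴ - Bᴴ * H * B := by
      rw [ha, hb, hH]
      simp only [conjTranspose_mul, conjTranspose_neg]
      simp only [Matrix.add_mul, Matrix.mul_add, Matrix.neg_mul, Matrix.mul_neg,
        Matrix.mul_assoc, sub_eq_add_neg]
      abel
    rw [← e]; exact h2
  have key' : A * H * Aᴴ = Bᴴ * H * B := sub_eq_zero.mp key
  set X : Matrix (Fin n) (Fin n) ℂ := Aᴴ * B⁻¹ with hX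
  have hfix : Xᴴ * H * X = H := by
    rw [hX, conjTranspose_mul, conjTranspose_conjTranspose,
      Matrix.conjTranspose_nonsing_inv]
    calc Bᴴ⁻¹ * A * H * (Aᴴ * B⁻¹) = Bᴴ⁻¹ * (A * H * Aᴴ) * B⁻¹ := by noncomm_ring
      _ = Bᴴ⁻¹ * (Bᴴ * H * B) * B⁻¹ := by rw [key']
      _ = (Bᴴ⁻¹ * Bᴴ) * H * (B * B⁻¹) := by noncomm_ring
      _ = H := by rw [hBBH, hBB, one_mul, mul_one]
  have hspec : ∀ μ ∈ spectrum ℂ X, ‖μ‖ < 1 := by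
    intro μ hμ
    by_contra hge
    push_neg at hge
    have hμ0 : μ ≠ 0 := by
      intro h; rw [h] at hge; norm_num at hge
    have hζ : ‖-μ⁻¹‖ ≤ 1 := by
      rw [norm_neg, norm_inv]
      exact inv_le_one_of_one_le₀ hge
    have hdet1 := hdet (-μ⁻¹) hζ
    apply spectrum.mem_iff.mp hμ
    have hfact : (algebraMap ℂ (Matrix (Fin n) (Fin n) ℂ)) μ - X
        = (μ • (B + (-μ⁻¹) • Aᴴ)) * B⁻¹ := by
      rw [Algebra.algebraMap_eq_smul_one, hX]
      have hfe : μ • (B + (-μ⁻¹) • Aᴴ) = μ • B - Aᴴ := by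
        rw [smul_add, smul_smul, mul_neg, mul_inv_cancel₀ hμ0, neg_smul, one_smul,
          ← sub_eq_add_neg]
      rw [hfe, Matrix.sub_mul, Matrix.smul_mul, hBB]
    rw [hfact, Matrix.isUnit_iff_isUnit_det, Matrix.det_mul, Matrix.det_smul,
      Matrix.det_nonsing_inv]
    refine (IsUnit.mul ?_ ?_)
    · exact ((isUnit_iff_ne_zero.mpr hμ0).pow _).mul
        (isUnit_iff_ne_zero.mpr hdet1)
    · exact isUnit_ringInverse.mpr hB
  have hH0 : H = 0 := fixed_eq_zero X H hspec hfix
  have hskew : ρᴴ = -ρ := by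
    have : ρ + ρᴴ = 0 := hH0
    linear_combination (norm := abel) this
  refine ⟨ρ, ⟨hskew, ha, hb⟩, ?_⟩
  rintro ρ' ⟨-, -, hb'⟩
  have hρB : ρ' * B = ρ * B := by
    have := hb'.symm.trans hb
    exact neg_injective this
  calc ρ' = ρ' * (B * B⁻¹) := by rw [hBB, mul_one]
    _ = (ρ' * B) * B⁻¹ := by noncomm_ring
    _ = (ρ * B) * B⁻¹ := by rw [hρB]
    _ = ρ * (B * B⁻¹) := by noncomm_ring
    _ = ρ := by rw [hBB, mul_one]
end

section
/- Let T₁,T₂,T₃ ∈ u(n) and suppose the matrix polynomial T(ζ) = T₂ + iT₃ + 2iT₁ζ + (-T₂+iT₃)ζ² factorizes as T(ζ) = (A + B*ζ)(B + A*ζ) for complex n×n matrices A, B. Then ‖T₂ + iT₃‖ ≤ 2‖T₁‖, where ‖·‖ is the operator norm. -/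
open Matrix
open scoped Matrix.Norms.L2Operator

/-- If `T₁,T₂,T₃ ∈ u(n)` and the matrix polynomial
`T(ζ) = T₂ + iT₃ + 2iT₁ζ + (-T₂+iT₃)ζ²` factorizes as
`T(ζ) = (A + B*ζ)(B + A*ζ)`, then `‖T₂ + iT₃‖ ≤ 2‖T₁‖` in the operator norm. -/
theorem positive_factorization_norm_bound
    (n : ℕ) (T₁ T₂ T₃ : Matrix (Fin n) (Fin n) ℂ)
    (hT1 : T₁ᴴ = -T₁) (hT2 : T₂ᴴ = -T₂) (hT3 : T₃ᴴ = -T₃)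
    (A B : Matrix (Fin n) (Fin n) ℂ)
    (hfact : ∀ ζ : ℂ,
      T₂ + Complex.I • T₃ + (2 * Complex.I * ζ) • T₁
          + ζ ^ 2 • (-T₂ + Complex.I • T₃)
        = (A + ζ • Bᴴ) * (B + ζ • Aᴴ)) :
    ‖T₂ + Complex.I • T₃‖ ≤ 2 * ‖T₁‖ := by
  -- Coefficient extraction: constant coefficient
  have h0 : T₂ + Complex.I • T₃ = A * B := by
    have := hfact 0
    simpa using this
  -- Coefficient of ζ
  have hM : (2 * Complex.I) • T₁ = A * Aᴴ + Bᴴ * B := by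
    have h1 := hfact 1
    have h2 := hfact (-1)
    simp only [one_smul, mul_one, one_pow, neg_smul, neg_one_sq, mul_neg, add_mul, mul_add,
      smul_mul_assoc, mul_smul_comm, neg_neg, neg_mul, smul_neg] at h1 h2
    linear_combination (norm := module) ((2:ℂ)⁻¹) • h1 - ((2:ℂ)⁻¹) • h2
  -- Positivity argument in the C*-algebra of operators on Euclidean space
  have key1 : ‖A * Aᴴ‖ ≤ ‖A * Aᴴ + Bᴴ * B‖ := by
    rw [cstar_norm_def, cstar_norm_def]
    simp only [_root_.map_mul, _root_.map_add, ← star_eq_conjTranspose, map_star]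
    exact CStarAlgebra.norm_le_norm_of_nonneg_of_le (mul_star_self_nonneg _)
      (le_add_of_nonneg_right (star_mul_self_nonneg _))
  have key2 : ‖Bᴴ * B‖ ≤ ‖A * Aᴴ + Bᴴ * B‖ := by
    rw [cstar_norm_def, cstar_norm_def]
    simp only [_root_.map_mul, _root_.map_add, ← star_eq_conjTranspose, map_star]
    exact CStarAlgebra.norm_le_norm_of_nonneg_of_le (star_mul_self_nonneg _)
      (le_add_of_nonneg_left (mul_star_self_nonneg _))
  have hMnorm : ‖A * Aᴴ + Bᴴ * B‖ = 2 * ‖T₁‖ := by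
    rw [← hM, norm_smul]
    simp [Complex.norm_two]
  have hA2 : ‖A‖ * ‖A‖ ≤ 2 * ‖T₁‖ := by
    have : ‖A * Aᴴ‖ = ‖A‖ * ‖A‖ := by
      have := Matrix.l2_opNorm_conjTranspose_mul_self Aᴴ
      rwa [Matrix.conjTranspose_conjTranspose, Matrix.l2_opNorm_conjTranspose] at this
    rw [← this]
    exact key1.trans_eq hMnorm
  have hB2 : ‖B‖ * ‖B‖ ≤ 2 * ‖T₁‖ := by
    rw [← Matrix.l2_opNorm_conjTranspose_mul_self B]
    exact key2.trans_eq hMnorm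
  rw [h0]
  calc ‖A * B‖ ≤ ‖A‖ * ‖B‖ := Matrix.l2_opNorm_mul A B
    _ ≤ 2 * ‖T₁‖ := by
        nlinarith [norm_nonneg A, norm_nonneg B, norm_nonneg T₁]
end

section
/- If A(t), B(t) are differentiable matrix-valued functions satisfying Ȧ = ½(B*BA - ABB*) and Ḃ = ½(A*AB - BAA*), then T₁ = -(i/2)(AA* + B*B), T₂ + iT₃ = AB (with T₂, T₃ skew-Hermitian determined by decomposing AB) satisfy the reduced Nahm–Schmid equations Ṫ₁ = -[T₂,T₃], Ṫ₂ = [T₃,T₁], Ṫ₃ = [T₁,T₂]. Equivalently, setting β = AB and α' := T₁-part, the equations d/dt(AB) + [(i/2)(AA*+B*B), AB] = 0 and the real equation hold. -/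
open Matrix

set_option linter.unreachableTactic false
set_option linter.unusedTactic false

/-- `T₁ = -(i/2)(AA* + B*B)`. -/
noncomputable def T1AB {n : ℕ} (A B : Matrix (Fin n) (Fin n) ℂ) :
    Matrix (Fin n) (Fin n) ℂ := (-(Complex.I / 2)) • (A * Aᴴ + Bᴴ * B)

/-- `T₂ = ½(AB - (AB)*)`. -/
noncomputable def T2AB {n : ℕ} (A B : Matrix (Fin n) (Fin n) ℂ) :
    Matrix (Fin n) (Fin n) ℂ := ((1 : ℂ) / 2) • (A * B - (A * B)ᴴ)

/-- `T₃ = -(i/2)(AB + (AB)*)`. -/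
noncomputable def T3AB {n : ℕ} (A B : Matrix (Fin n) (Fin n) ℂ) :
    Matrix (Fin n) (Fin n) ℂ := (-(Complex.I / 2)) • (A * B + (A * B)ᴴ)

section Aux

variable {n : ℕ}

lemma myDerivMul {M N : ℝ → Matrix (Fin n) (Fin n) ℂ}
    {M' N' : Matrix (Fin n) (Fin n) ℂ} {t : ℝ}
    (hM : ∀ i j, HasDerivAt (fun s => M s i j) (M' i j) t)
    (hN : ∀ i j, HasDerivAt (fun s => N s i j) (N' i j) t) (i j : Fin n) :
    HasDerivAt (fun s => (M s * N s) i j) ((M' * N t + M t * N') i j) t := by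
  have h : HasDerivAt (fun s => ∑ k, M s i k * N s k j)
      (∑ k : Fin n, (M' i k * N t k j + M t i k * N' k j)) t :=
    HasDerivAt.fun_sum fun k _ => (hM i k).mul (hN k j)
  simpa [Matrix.mul_apply, Matrix.add_apply, Finset.sum_add_distrib] using h

lemma myDerivCT {M : ℝ → Matrix (Fin n) (Fin n) ℂ}
    {M' : Matrix (Fin n) (Fin n) ℂ} {t : ℝ}
    (hM : ∀ i j, HasDerivAt (fun s => M s i j) (M' i j) t) (i j : Fin n) :
    HasDerivAt (fun s => (M s)ᴴ i j) (M'ᴴ i j) t := by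
  simpa [Matrix.conjTranspose_apply] using (hM j i).star

-- matrix identities
variable (a b : Matrix (Fin n) (Fin n) ℂ)

local notation "a'" => ((1 : ℂ) / 2) • (bᴴ * b * a - a * (b * bᴴ))
local notation "b'" => ((1 : ℂ) / 2) • (aᴴ * a * b - b * (a * aᴴ))

lemma id1 : (-(Complex.I / 2)) • ((a' * aᴴ + a * (a')ᴴ) + ((b')ᴴ * b + bᴴ * b'))
    = -⁅T2AB a b, T3AB a b⁆ := by
  simp only [T2AB, T3AB, Ring.lie_def, conjTranspose_smul, conjTranspose_sub,
    conjTranspose_add, conjTranspose_mul, conjTranspose_conjTranspose,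
    smul_mul_assoc, mul_smul_comm, smul_smul, smul_add, smul_sub, mul_add,
    add_mul, mul_sub, sub_mul, mul_assoc, star_div₀, star_one, RCLike.star_def,
    map_ofNat, Complex.conj_I]
  ring_nf
  match_scalars <;> (first | ring1 | (simp only [Complex.I_sq]; ring1) | simp [Complex.I_sq])

lemma id2 : ((1 : ℂ) / 2) • ((a' * b + a * b') - (a' * b + a * b')ᴴ)
    = ⁅T3AB a b, T1AB a b⁆ := by
  simp only [T1AB, T2AB, T3AB, Ring.lie_def, conjTranspose_smul, conjTranspose_sub,
    conjTranspose_add, conjTranspose_mul, conjTranspose_conjTranspose,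
    smul_mul_assoc, mul_smul_comm, smul_smul, smul_add, smul_sub, mul_add,
    add_mul, mul_sub, sub_mul, mul_assoc, star_div₀, star_one, RCLike.star_def,
    map_ofNat, Complex.conj_I]
  ring_nf
  match_scalars <;> (first | ring1 | (simp only [Complex.I_sq]; ring1) | simp [Complex.I_sq])

lemma id3 : (-(Complex.I / 2)) • ((a' * b + a * b') + (a' * b + a * b')ᴴ)
    = ⁅T1AB a b, T2AB a b⁆ := by
  simp only [T1AB, T2AB, T3AB, Ring.lie_def, conjTranspose_smul, conjTranspose_sub,
    conjTranspose_add, conjTranspose_mul, conjTranspose_conjTranspose,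
    smul_mul_assoc, mul_smul_comm, smul_smul, smul_add, smul_sub, mul_add,
    add_mul, mul_sub, sub_mul, mul_assoc, star_div₀, star_one, RCLike.star_def,
    map_ofNat, Complex.conj_I]
  ring_nf
  match_scalars <;> (first | ring1 | (simp only [Complex.I_sq]; ring1) | simp [Complex.I_sq])

lemma id0 : T2AB a b + Complex.I • T3AB a b = a * b := by
  simp only [T1AB, T2AB, T3AB, smul_smul, smul_add, smul_sub]
  match_scalars <;> (ring_nf; simp [Complex.I_sq]; try ring1)

end Aux

/-- If `A(t), B(t)` satisfy `Ȧ = ½(B*BA - ABB*)` and `Ḃ = ½(A*AB - BAA*)`,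
then `T₁ = -(i/2)(AA* + B*B)`, `T₂ = ½(AB - (AB)*)`, `T₃ = -(i/2)(AB + (AB)*)`
satisfy `T₂ + iT₃ = AB` and the reduced Nahm–Schmid equations
`Ṫ₁ = -[T₂,T₃]`, `Ṫ₂ = [T₃,T₁]`, `Ṫ₃ = [T₁,T₂]`. -/
theorem basu_harvey_terashima_to_nahm_schmid
    (n : ℕ) (A B : ℝ → Matrix (Fin n) (Fin n) ℂ)
    (hA : ∀ t i j, HasDerivAt (fun s => A s i j)
      ((((1 : ℂ) / 2) • ((B t)ᴴ * B t * A t - A t * (B t * (B t)ᴴ))) i j) t)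
    (hB : ∀ t i j, HasDerivAt (fun s => B s i j)
      ((((1 : ℂ) / 2) • ((A t)ᴴ * A t * B t - B t * (A t * (A t)ᴴ))) i j) t) :
    (∀ t, T2AB (A t) (B t) + Complex.I • T3AB (A t) (B t) = A t * B t) ∧
    (∀ t i j, HasDerivAt (fun s => T1AB (A s) (B s) i j)
      ((-⁅T2AB (A t) (B t), T3AB (A t) (B t)⁆) i j) t) ∧
    (∀ t i j, HasDerivAt (fun s => T2AB (A s) (B s) i j)
      ((⁅T3AB (A t) (B t), T1AB (A t) (B t)⁆) i j) t) ∧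
    (∀ t i j, HasDerivAt (fun s => T3AB (A s) (B s) i j)
      ((⁅T1AB (A t) (B t), T2AB (A t) (B t)⁆) i j) t) := by
  refine ⟨fun t => id0 (A t) (B t), ?_, ?_, ?_⟩
  · intro t i j
    set a := A t with ha
    set b := B t with hb
    have hAAH := myDerivMul (hA t) (myDerivCT (hA t)) i j
    have hBHB := myDerivMul (myDerivCT (hB t)) (hB t) i j
    have h := ((hAAH.add hBHB).const_mul (-(Complex.I / 2)))
    rw [← ha, ← hb] at *
    have : HasDerivAt (fun s => T1AB (A s) (B s) i j)
        ((-(Complex.I / 2)) • ((((1 : ℂ) / 2) • (bᴴ * b * a - a * (b * bᴴ))) * aᴴ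
          + a * (((1 : ℂ) / 2) • (bᴴ * b * a - a * (b * bᴴ)))ᴴ
          + ((((1 : ℂ) / 2) • (aᴴ * a * b - b * (a * aᴴ)))ᴴ * b
          + bᴴ * (((1 : ℂ) / 2) • (aᴴ * a * b - b * (a * aᴴ))))) i j) t := by
      simp only [T1AB, Matrix.smul_apply, Matrix.add_apply, smul_eq_mul]
      exact h
    rw [← id1 a b]
    convert this using 2 <;> simp [Matrix.add_apply]
  · intro t i j
    set a := A t with ha
    set b := B t with hb
    have hAB := myDerivMul (hA t) (hB t) i j
    have hABH := myDerivCT (fun i j => myDerivMul (hA t) (hB t) i j) i j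
    have h := ((hAB.sub hABH).const_mul ((1 : ℂ) / 2))
    rw [← ha, ← hb] at *
    have : HasDerivAt (fun s => T2AB (A s) (B s) i j)
        (((1 : ℂ) / 2) • (((((1 : ℂ) / 2) • (bᴴ * b * a - a * (b * bᴴ))) * b
          + a * (((1 : ℂ) / 2) • (aᴴ * a * b - b * (a * aᴴ))))
          - ((((1 : ℂ) / 2) • (bᴴ * b * a - a * (b * bᴴ))) * b
          + a * (((1 : ℂ) / 2) • (aᴴ * a * b - b * (a * aᴴ))))ᴴ) i j) t := by
      simp only [T2AB, Matrix.smul_apply, Matrix.sub_apply, smul_eq_mul]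
      exact h
    rw [← id2 a b]
    exact this
  · intro t i j
    set a := A t with ha
    set b := B t with hb
    have hAB := myDerivMul (hA t) (hB t) i j
    have hABH := myDerivCT (fun i j => myDerivMul (hA t) (hB t) i j) i j
    have h := ((hAB.add hABH).const_mul (-(Complex.I / 2)))
    rw [← ha, ← hb] at *
    have : HasDerivAt (fun s => T3AB (A s) (B s) i j)
        ((-(Complex.I / 2)) • (((((1 : ℂ) / 2) • (bᴴ * b * a - a * (b * bᴴ))) * b
          + a * (((1 : ℂ) / 2) • (aᴴ * a * b - b * (a * aᴴ))))
          + ((((1 : ℂ) / 2) • (bᴴ * b * a - a * (b * bᴴ))) * b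
          + a * (((1 : ℂ) / 2) • (aᴴ * a * b - b * (a * aᴴ))))ᴴ) i j) t := by
      simp only [T3AB, Matrix.smul_apply, Matrix.add_apply, smul_eq_mul]
      exact h
    rw [← id3 a b]
    exact this
end

section
/- If (T₀,T₁,T₂,T₃) solves the Nahm–Schmid equations and we set T(ζ) = β - ζ(α + α*) + ζ²β* and T₊(ζ) = α - ζβ* (with α = T₀ - iT₁, β = T₂ + iT₃), then dT(ζ)/dt = [T(ζ), T₊(ζ)] for every ζ ∈ ℂ; consequently tr(T(ζ)^k) is constant in t for every k ≥ 1 and every ζ. -/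
open Matrix

/-- The Lax matrix `T(ζ) = β - ζ(α + α*) + ζ²β*` with `α = T₀ - iT₁`,
`β = T₂ + iT₃`. -/
noncomputable def LaxT {n : ℕ} (T₀ T₁ T₂ T₃ : Matrix (Fin n) (Fin n) ℂ)
    (ζ : ℂ) : Matrix (Fin n) (Fin n) ℂ :=
  (T₂ + Complex.I • T₃)
    - ζ • ((T₀ - Complex.I • T₁) + (T₀ - Complex.I • T₁)ᴴ)
    + ζ ^ 2 • (T₂ + Complex.I • T₃)ᴴ

/-- `T₊(ζ) = α - ζβ*`. -/
noncomputable def LaxTplus {n : ℕ} (T₀ T₁ T₂ T₃ : Matrix (Fin n) (Fin n) ℂ)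
    (ζ : ℂ) : Matrix (Fin n) (Fin n) ℂ :=
  (T₀ - Complex.I • T₁) - ζ • (T₂ + Complex.I • T₃)ᴴ

section Aux

open Complex

variable {n : ℕ}

private lemma laxT_simp (t0 t1 t2 t3 : Matrix (Fin n) (Fin n) ℂ)
    (h0 : t0ᴴ = -t0) (h1 : t1ᴴ = -t1) (h2 : t2ᴴ = -t2) (h3 : t3ᴴ = -t3) (ζ : ℂ) :
    LaxT t0 t1 t2 t3 ζ = (1 - ζ^2) • t2 + (I * (1 + ζ^2)) • t3 + (2 * I * ζ) • t1 := by
  unfold LaxT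
  simp only [conjTranspose_add, conjTranspose_sub, conjTranspose_smul, h0, h1, h2, h3,
    RCLike.star_def, Complex.conj_I]
  module

private lemma laxTplus_simp (t0 t1 t2 t3 : Matrix (Fin n) (Fin n) ℂ)
    (h2 : t2ᴴ = -t2) (h3 : t3ᴴ = -t3) (ζ : ℂ) :
    LaxTplus t0 t1 t2 t3 ζ = t0 - I • t1 + ζ • t2 - (I * ζ) • t3 := by
  unfold LaxTplus
  simp only [conjTranspose_add, conjTranspose_smul, h2, h3, RCLike.star_def, Complex.conj_I]
  module

private lemma key_bracket (t0 t1 t2 t3 : Matrix (Fin n) (Fin n) ℂ) (ζ : ℂ) :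
    ⁅(1 - ζ^2) • t2 + (I * (1 + ζ^2)) • t3 + (2 * I * ζ) • t1,
      t0 - I • t1 + ζ • t2 - (I * ζ) • t3⁆
    = (1 - ζ^2) • (⁅t3,t1⁆ - ⁅t0,t2⁆) + (I * (1 + ζ^2)) • (⁅t1,t2⁆ - ⁅t0,t3⁆)
      + (2 * I * ζ) • (-⁅t2,t3⁆ - ⁅t0,t1⁆) := by
  simp only [Ring.lie_def, mul_add, add_mul, mul_sub, sub_mul, smul_mul_assoc,
    mul_smul_comm, smul_sub, smul_add, smul_smul, smul_neg]
  match_scalars <;> ring_nf <;> try simp [Complex.I_sq] <;> try ring_nf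

private lemma trace_pow_const (A P : ℝ → Matrix (Fin n) (Fin n) ℂ)
    (hA : ∀ t i j, HasDerivAt (fun s => A s i j) (⁅A t, P t⁆ i j) t)
    (k : ℕ) (t : ℝ) : trace (A t ^ k) = trace (A 0 ^ k) := by
  have hpow : ∀ k t (i j : Fin n), HasDerivAt (fun s => (A s ^ k) i j)
      ((∑ m ∈ Finset.range k, A t ^ m * ⁅A t, P t⁆ * A t ^ (k - 1 - m)) i j) t := by
    intro k
    induction k with
    | zero =>
      intro t i j
      simpa using hasDerivAt_const t ((1 : Matrix (Fin n) (Fin n) ℂ) i j)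
    | succ k ih =>
      intro t i j
      have h1 : (fun s => (A s ^ (k+1)) i j) = fun s => ∑ x, (A s ^ k) i x * A s x j := by
        funext s; rw [pow_succ, Matrix.mul_apply]
      rw [h1]
      have hD : (∑ m ∈ Finset.range (k+1), A t ^ m * ⁅A t, P t⁆ * A t ^ (k + 1 - 1 - m))
          = (∑ m ∈ Finset.range k, A t ^ m * ⁅A t, P t⁆ * A t ^ (k - 1 - m)) * A t
            + A t ^ k * ⁅A t, P t⁆ := by
        rw [Finset.sum_range_succ, Finset.sum_mul]
        congr 1
        · apply Finset.sum_congr rfl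
          intro m hm
          have hmk := Finset.mem_range.mp hm
          rw [show k + 1 - 1 - m = (k - 1 - m) + 1 by omega, pow_succ, ← mul_assoc]
        · simp
      rw [hD]
      have := HasDerivAt.fun_sum (fun x (_ : x ∈ (Finset.univ : Finset (Fin n))) =>
        (ih t i x).mul (hA t x j))
      convert this using 1
      · rfl
      · rfl
      simp [Matrix.add_apply, Matrix.mul_apply, Finset.sum_add_distrib]
  have htr : ∀ t, HasDerivAt (fun s => trace (A s ^ k)) (0 : ℂ) t := by
    intro t
    have h0 : trace (∑ m ∈ Finset.range k, A t ^ m * ⁅A t, P t⁆ * A t ^ (k - 1 - m)) = 0 := by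
      rw [trace_sum]
      apply Finset.sum_eq_zero
      intro m hm
      have hmk := Finset.mem_range.mp hm
      rw [trace_mul_cycle, ← pow_add, show k - 1 - m + m = k - 1 by omega,
        Ring.lie_def, mul_sub, trace_sub, ← mul_assoc, ← mul_assoc,
        trace_mul_cycle (A t ^ (k-1)) (P t) (A t), ← pow_succ, ← pow_succ', sub_self]
    have := HasDerivAt.fun_sum (fun i (_ : i ∈ (Finset.univ : Finset (Fin n))) => hpow k t i i)
    rw [show (fun s => trace (A s ^ k)) = fun s => ∑ i, (A s ^ k) i i from rfl]
    convert this using 1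
    · rfl
    rw [← h0]
    simp [Matrix.trace, Matrix.diag]
  exact is_const_of_deriv_eq_zero (fun x => (htr x).differentiableAt)
    (fun x => (htr x).deriv) t 0

end Aux

/-- If `(T₀,T₁,T₂,T₃)` solves the Nahm–Schmid equations in `u(n)`, then
`dT(ζ)/dt = [T(ζ), T₊(ζ)]` for every `ζ ∈ ℂ`, and consequently `tr(T(ζ)^k)`
is constant in `t` for every `k ≥ 1` and every `ζ`. -/
theorem nahm_schmid_lax_pair
    (n : ℕ) (T₀ T₁ T₂ T₃ T₀' T₁' T₂' T₃' : ℝ → Matrix (Fin n) (Fin n) ℂ)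
    (hu0 : ∀ t, (T₀ t)ᴴ = -T₀ t) (hu1 : ∀ t, (T₁ t)ᴴ = -T₁ t)
    (hu2 : ∀ t, (T₂ t)ᴴ = -T₂ t) (hu3 : ∀ t, (T₃ t)ᴴ = -T₃ t)
    (hd0 : ∀ t i j, HasDerivAt (fun s => T₀ s i j) (T₀' t i j) t)
    (hd1 : ∀ t i j, HasDerivAt (fun s => T₁ s i j) (T₁' t i j) t)
    (hd2 : ∀ t i j, HasDerivAt (fun s => T₂ s i j) (T₂' t i j) t)
    (hd3 : ∀ t i j, HasDerivAt (fun s => T₃ s i j) (T₃' t i j) t)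
    (e1 : ∀ t, T₁' t + ⁅T₀ t, T₁ t⁆ = -⁅T₂ t, T₃ t⁆)
    (e2 : ∀ t, T₂' t + ⁅T₀ t, T₂ t⁆ = ⁅T₃ t, T₁ t⁆)
    (e3 : ∀ t, T₃' t + ⁅T₀ t, T₃ t⁆ = ⁅T₁ t, T₂ t⁆) :
    (∀ ζ : ℂ, ∀ t : ℝ, ∀ i j,
      HasDerivAt (fun s => LaxT (T₀ s) (T₁ s) (T₂ s) (T₃ s) ζ i j)
        (⁅LaxT (T₀ t) (T₁ t) (T₂ t) (T₃ t) ζ,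
          LaxTplus (T₀ t) (T₁ t) (T₂ t) (T₃ t) ζ⁆ i j) t) ∧
    (∀ k : ℕ, 1 ≤ k → ∀ ζ : ℂ, ∀ t : ℝ,
      Matrix.trace ((LaxT (T₀ t) (T₁ t) (T₂ t) (T₃ t) ζ) ^ k)
        = Matrix.trace ((LaxT (T₀ 0) (T₁ 0) (T₂ 0) (T₃ 0) ζ) ^ k)) := by
  open Complex in
  have main : ∀ ζ : ℂ, ∀ t : ℝ, ∀ i j,
      HasDerivAt (fun s => LaxT (T₀ s) (T₁ s) (T₂ s) (T₃ s) ζ i j)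
        (⁅LaxT (T₀ t) (T₁ t) (T₂ t) (T₃ t) ζ,
          LaxTplus (T₀ t) (T₁ t) (T₂ t) (T₃ t) ζ⁆ i j) t := by
    intro ζ t i j
    have hfun : (fun s => LaxT (T₀ s) (T₁ s) (T₂ s) (T₃ s) ζ i j)
        = fun s => (1 - ζ^2) * T₂ s i j + (I * (1 + ζ^2)) * T₃ s i j
          + (2 * I * ζ) * T₁ s i j := by
      funext s
      rw [laxT_simp _ _ _ _ (hu0 s) (hu1 s) (hu2 s) (hu3 s)]
      simp [Matrix.add_apply, Matrix.smul_apply, smul_eq_mul]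
    have hb : ⁅LaxT (T₀ t) (T₁ t) (T₂ t) (T₃ t) ζ, LaxTplus (T₀ t) (T₁ t) (T₂ t) (T₃ t) ζ⁆
        = (1 - ζ^2) • T₂' t + (I * (1 + ζ^2)) • T₃' t + (2 * I * ζ) • T₁' t := by
      have h1' : T₁' t = -⁅T₂ t, T₃ t⁆ - ⁅T₀ t, T₁ t⁆ := eq_sub_of_add_eq (e1 t)
      have h2' : T₂' t = ⁅T₃ t, T₁ t⁆ - ⁅T₀ t, T₂ t⁆ := eq_sub_of_add_eq (e2 t)
      have h3' : T₃' t = ⁅T₁ t, T₂ t⁆ - ⁅T₀ t, T₃ t⁆ := eq_sub_of_add_eq (e3 t)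
      rw [laxT_simp _ _ _ _ (hu0 t) (hu1 t) (hu2 t) (hu3 t),
        laxTplus_simp _ _ _ _ (hu2 t) (hu3 t), h1', h2', h3', key_bracket]
    rw [hfun, hb]
    have hder := (((hd2 t i j).const_mul (1 - ζ^2)).fun_add
        ((hd3 t i j).const_mul (I * (1 + ζ^2)))).fun_add ((hd1 t i j).const_mul (2 * I * ζ))
    convert hder using 1
    · rfl
    · rfl
  refine ⟨main, fun k _ ζ t => ?_⟩
  exact trace_pow_const (fun s => LaxT (T₀ s) (T₁ s) (T₂ s) (T₃ s) ζ)
    (fun s => LaxTplus (T₀ s) (T₁ s) (T₂ s) (T₃ s) ζ) (main ζ) k t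
end
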